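/- arXiv:2502.02981 — 9 statements merged into one kernel-verified Lean document; each statement's English description precedes it below -/
import Mathlib

section
/- A matrix A ∈ Mat₃(L) satisfies A^g = A_g⁻¹·A·A_g if and only if there exist a, b, c ∈ L such that A is the matrix with rows (a, ξ·g(c), ξ·g²(b)), (b, g(a), ξ·g²(c)), (c, g(b), g²(a)); in this case (a,b,c) is the first column of A. -/
open Matrix

/-- A matrix `A ∈ Mat₃(L)` satisfies `A^g = A_g⁻¹·A·A_g` if and only if there
exist `a, b, c ∈ L` such that `A` is the matrix with rows `(a, ξ·g(c), ξ·g²(b))`,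
`(b, g(a), ξ·g²(c))`, `(c, g(b), g²(a))`; in this case `(a,b,c)` is the first column of `A`. -/
theorem stmt_0 (k L : Type*) [Field k] [Field L] [Algebra k L] [IsGalois k L]
    (hdeg : Module.finrank k L = 3)
    (g : L ≃ₐ[k] L) (hg : ∀ σ : L ≃ₐ[k] L, σ ∈ Subgroup.zpowers g)
    (ξ : k) (hξ : ξ ≠ 0)
    (A : Matrix (Fin 3) (Fin 3) L) :
    (A.map ⇑g =
        (!![0, 0, algebraMap k L ξ; 1, 0, 0; 0, 1, 0])⁻¹ * A *
          !![0, 0, algebraMap k L ξ; 1, 0, 0; 0, 1, 0]) ↔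
      ∃ a b c : L,
        A 0 0 = a ∧ A 1 0 = b ∧ A 2 0 = c ∧
          A = !![a, algebraMap k L ξ * g c, algebraMap k L ξ * g (g b);
                 b, g a, algebraMap k L ξ * g (g c);
                 c, g b, g (g a)] := by
  set ξL : L := algebraMap k L ξ with hξLdef
  set M : Matrix (Fin 3) (Fin 3) L := !![0, 0, ξL; 1, 0, 0; 0, 1, 0] with hM
  have hξL : ξL ≠ 0 := by
    simpa [hξLdef] using (map_ne_zero (algebraMap k L)).mpr hξ
  have hdet : M.det = ξL := by simp [hM, Matrix.det_fin_three]
  have hInv : Invertible M := M.invertibleOfIsUnitDet (by rw [hdet]; exact isUnit_iff_ne_zero.2 hξL)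
  have : FiniteDimensional k L := Module.finite_of_finrank_pos (by rw [hdeg]; norm_num)
  have hcard : Fintype.card (L ≃ₐ[k] L) = 3 := by
    rw [← Nat.card_eq_fintype_card, IsGalois.card_aut_eq_finrank, hdeg]
  have hg3 : ∀ x : L, g (g (g x)) = x := by
    have h1 : g ^ 3 = 1 := by rw [← hcard]; exact pow_card_eq_one
    intro x
    have := DFunLike.congr_fun h1 x
    simpa [pow_succ, AlgEquiv.mul_apply] using this
  have hgξ : g ξL = ξL := by rw [hξLdef]; exact g.commutes ξ
  have key : (A.map ⇑g = M⁻¹ * A * M) ↔ M * A.map ⇑g = A * M := by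
    rw [mul_assoc, eq_comm, Matrix.inv_mul_eq_iff_eq_mul_of_invertible, eq_comm]
  rw [key]
  constructor
  · intro h
    have h' := fun i j => congrFun (congrFun h i) j
    have e00 := h' 0 0; have e01 := h' 0 1
    have e10 := h' 1 0; have e11 := h' 1 1
    have e20 := h' 2 0; have e21 := h' 2 1
    simp [hM, Matrix.mul_apply, Fin.sum_univ_three, Matrix.map_apply] at e00 e01 e10 e11 e20 e21
    refine ⟨A 0 0, A 1 0, A 2 0, rfl, rfl, rfl, ?_⟩
    ext i j
    fin_cases i <;> fin_cases j <;>
      simp [← e00, ← e01, ← e10, ← e11, ← e20, ← e21, _root_.map_mul, hgξ]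
  · rintro ⟨a, b, c, ha, hb, hc, rfl⟩
    ext i j
    fin_cases i <;> fin_cases j <;>
      simp [hM, Matrix.mul_apply, Fin.sum_univ_three, Matrix.map_apply, _root_.map_mul,
        hgξ, hg3, mul_comm, Matrix.vecHead, Matrix.vecTail]
end

section
/- If A ∈ Mat₃(L) satisfies A^g = A_g⁻¹·A·A_g and has first column (a, b, c), then the product P(A) of all nine entries of A equals ξ³ · N_{L/k}(a·b·c), where N_{L/k}(x) = x·g(x)·g²(x); in particular P(A) is fixed by g and hence lies in (the image of) k. -/
open Matrix

/-- If `A ∈ Mat₃(L)` satisfies `A^g = A_g⁻¹·A·A_g` and has first column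
`(a, b, c)`, then the product `P(A)` of all nine entries of `A` equals
`ξ³ · N_{L/k}(a·b·c)`, where `N_{L/k}(x) = x·g(x)·g²(x)`; in particular `P(A)` is fixed by
`g` and hence lies in (the image of) `k`. -/
theorem stmt_2 (k L : Type*) [Field k] [Field L] [Algebra k L] [IsGalois k L]
    (hdeg : Module.finrank k L = 3)
    (g : L ≃ₐ[k] L) (hg : ∀ σ : L ≃ₐ[k] L, σ ∈ Subgroup.zpowers g)
    (ξ : k) (hξ : ξ ≠ 0)
    (A : Matrix (Fin 3) (Fin 3) L)
    (hA : A.map ⇑g =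
        (!![0, 0, algebraMap k L ξ; 1, 0, 0; 0, 1, 0])⁻¹ * A *
          !![0, 0, algebraMap k L ξ; 1, 0, 0; 0, 1, 0])
    (a b c : L) (ha : A 0 0 = a) (hb : A 1 0 = b) (hc : A 2 0 = c) :
    (∏ i : Fin 3, ∏ j : Fin 3, A i j) =
        algebraMap k L ξ ^ 3 * ((a * b * c) * g (a * b * c) * g (g (a * b * c))) ∧
      g (∏ i : Fin 3, ∏ j : Fin 3, A i j) = ∏ i : Fin 3, ∏ j : Fin 3, A i j ∧
      (∏ i : Fin 3, ∏ j : Fin 3, A i j) ∈ Set.range (algebraMap k L) := by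
  have : FiniteDimensional k L := FiniteDimensional.of_finrank_pos (by omega)
  set e : L := algebraMap k L ξ with he
  have he0 : e ≠ 0 := by simp [he, hξ]
  have hge : g e = e := g.commutes ξ
  set Ag : Matrix (Fin 3) (Fin 3) L := !![0, 0, e; 1, 0, 0; 0, 1, 0] with hAg
  have hdet : IsUnit Ag.det := by
    simp [hAg, Matrix.det_fin_three, isUnit_iff_ne_zero, he0]
  have key : Ag * A.map ⇑g = A * Ag := by
    rw [hA, ← Matrix.mul_assoc, ← Matrix.mul_assoc, Matrix.mul_nonsing_inv _ hdet, Matrix.one_mul]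
  have E : ∀ i j, (Ag * A.map ⇑g) i j = (A * Ag) i j := fun i j => by rw [key]
  have h00 := E 0 0; have h01 := E 0 1
  have h10 := E 1 0; have h11 := E 1 1
  have h20 := E 2 0; have h21 := E 2 1
  simp [hAg, Matrix.mul_apply, Fin.sum_univ_three, Matrix.vecHead, Matrix.vecTail]
    at h00 h01 h10 h11 h20 h21
  rw [ha] at h10
  rw [hb] at h20
  rw [hc] at h00
  -- entries
  have e11 : A 1 1 = g a := h10.symm
  have e21 : A 2 1 = g b := h20.symm
  have e01 : A 0 1 = e * g c := h00.symm
  have e22 : A 2 2 = g (g a) := by rw [← h21, e11]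
  have e02 : A 0 2 = e * g (g b) := by rw [← h01, e21]
  have e12 : A 1 2 = e * g (g c) := by rw [← h11, e01, _root_.map_mul, hge]
  -- group facts
  have hcard : Fintype.card (L ≃ₐ[k] L) = 3 := by
    rw [← Nat.card_eq_fintype_card, IsGalois.card_aut_eq_finrank, hdeg]
  have hg3 : g ^ 3 = 1 := by rw [← hcard]; exact pow_card_eq_one
  have hggg : ∀ t : L, g (g (g t)) = t := by
    intro t
    have := congrArg (fun σ : L ≃ₐ[k] L => σ t) hg3
    simpa [pow_succ, AlgEquiv.mul_apply] using this
  set P : L := ∏ i : Fin 3, ∏ j : Fin 3, A i j with hP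
  have hP1 : P = e ^ 3 * ((a * b * c) * g (a * b * c) * g (g (a * b * c))) := by
    simp only [hP, Fin.prod_univ_three, ha, hb, hc, e01, e02, e11, e12, e21, e22,
      _root_.map_mul]
    ring
  have hP2 : g P = P := by
    rw [hP1]
    simp only [_root_.map_mul, map_pow, hge, hggg]
    ring
  refine ⟨hP1, hP2, ?_⟩
  have hσ : ∀ σ : L ≃ₐ[k] L, σ P = P := by
    intro σ
    have hfix : ∀ m : ℕ, (g ^ m) P = P := by
      intro m
      induction m with
      | zero => simp
      | succ n ih => rw [pow_succ, AlgEquiv.mul_apply, hP2, ih]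
    obtain ⟨n, rfl⟩ := hg σ
    match n with
    | Int.ofNat m => simpa using hfix m
    | Int.negSucc m =>
      show (g ^ Int.negSucc m) P = P
      rw [zpow_negSucc]
      show ((g ^ (m + 1)).symm) P = P
      exact (AlgEquiv.symm_apply_eq _).mpr (hfix (m + 1)).symm
  have hmem : P ∈ IntermediateField.fixedField
      (IntermediateField.fixingSubgroup (⊥ : IntermediateField k L)) :=
    fun σ => hσ σ.1
  rw [IsGalois.fixedField_fixingSubgroup] at hmem
  exact IntermediateField.mem_bot.mp hmem
end

section
/- The set D := {A ∈ Mat₃(L) : A^g = A_g⁻¹·A·A_g} is a k-subalgebra of Mat₃(L): it contains the scalar matrices c·I₃ for c ∈ k, is closed under addition and matrix multiplication, and as a k-vector space it has dimension 9. -/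
open Matrix

set_option maxHeartbeats 2000000 in
set_option synthInstance.maxHeartbeats 400000 in
/-- The set `D := {A ∈ Mat₃(L) : A^g = A_g⁻¹·A·A_g}` is a `k`-subalgebra of
`Mat₃(L)` (so it contains the scalar matrices `c·I₃` for `c ∈ k` and is closed under
addition and matrix multiplication), and as a `k`-vector space it has dimension 9. -/
theorem stmt_3 (k L : Type*) [Field k] [Field L] [Algebra k L] [IsGalois k L]
    (hdeg : Module.finrank k L = 3)
    (g : L ≃ₐ[k] L) (hg : ∀ σ : L ≃ₐ[k] L, σ ∈ Subgroup.zpowers g)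
    (ξ : k) (hξ : ξ ≠ 0) :
    ∃ S : Subalgebra k (Matrix (Fin 3) (Fin 3) L),
      (S : Set (Matrix (Fin 3) (Fin 3) L)) =
        {A : Matrix (Fin 3) (Fin 3) L |
          A.map ⇑g =
            (!![0, 0, algebraMap k L ξ; 1, 0, 0; 0, 1, 0])⁻¹ * A *
              !![0, 0, algebraMap k L ξ; 1, 0, 0; 0, 1, 0]} ∧
      Module.finrank k S = 9 := by
  have hfd : FiniteDimensional k L := FiniteDimensional.of_finrank_pos (by omega)
  set ξ' : L := algebraMap k L ξ with hxi
  have hξ' : ξ' ≠ 0 := by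
    simpa [hxi] using (map_ne_zero (algebraMap k L)).mpr hξ
  set P : Matrix (Fin 3) (Fin 3) L := !![0, 0, ξ'; 1, 0, 0; 0, 1, 0] with hP
  have hdet : P.det = ξ' := by simp [hP, Matrix.det_fin_three]
  have hU : IsUnit P.det := by rw [hdet]; exact hξ'.isUnit
  have hP1 : P * P⁻¹ = 1 := Matrix.mul_nonsing_inv _ hU
  have hP2 : P⁻¹ * P = 1 := Matrix.nonsing_inv_mul _ hU
  have key : ∀ A : Matrix (Fin 3) (Fin 3) L,
      A.map ⇑g = P⁻¹ * A * P ↔ P * A.map ⇑g = A * P := by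
    intro A
    constructor
    · intro h
      rw [h, ← Matrix.mul_assoc, ← Matrix.mul_assoc, hP1, Matrix.one_mul]
    · intro h
      calc A.map ⇑g = (P⁻¹ * P) * A.map ⇑g := by rw [hP2, Matrix.one_mul]
        _ = P⁻¹ * (P * A.map ⇑g) := by rw [Matrix.mul_assoc]
        _ = P⁻¹ * (A * P) := by rw [h]
        _ = P⁻¹ * A * P := by rw [Matrix.mul_assoc]
  have hcard : Fintype.card (L ≃ₐ[k] L) = 3 := by
    rw [← Nat.card_eq_fintype_card, IsGalois.card_aut_eq_finrank, hdeg]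
  have hg3 : ∀ x : L, g (g (g x)) = x := by
    intro x
    have h1 : g ^ Fintype.card (L ≃ₐ[k] L) = 1 := pow_card_eq_one
    rw [hcard] at h1
    have h2 : g (g (g x)) = (g ^ 3) x := by
      rw [pow_succ, pow_succ, pow_one]; rfl
    rw [h2, h1]; rfl
  have hgxi : g ξ' = ξ' := by simp [hxi]
  refine ⟨{ carrier := {A : Matrix (Fin 3) (Fin 3) L | A.map ⇑g = P⁻¹ * A * P}
            mul_mem' := ?_
            one_mem' := ?_
            add_mem' := ?_
            zero_mem' := ?_
            algebraMap_mem' := ?_ }, rfl, ?_⟩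
  · intro A B hA hB
    simp only [Set.mem_setOf_eq] at *
    have hmul : (A * B).map ⇑g = A.map ⇑g * B.map ⇑g := by
      ext i j
      simp [Matrix.map_apply, Matrix.mul_apply, _root_.map_sum, _root_.map_mul]
    rw [hmul, hA, hB]
    calc P⁻¹ * A * P * (P⁻¹ * B * P) = P⁻¹ * A * (P * P⁻¹) * B * P := by
          noncomm_ring
      _ = P⁻¹ * (A * B) * P := by rw [hP1]; noncomm_ring
  · -- one_mem
    simp only [Set.mem_setOf_eq]
    have h1 : (1 : Matrix (Fin 3) (Fin 3) L).map ⇑g = 1 := by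
      ext i j
      by_cases h : i = j <;> simp [Matrix.map_apply, Matrix.one_apply, h]
    rw [h1, Matrix.mul_one, hP2]
  · intro A B hA hB
    simp only [Set.mem_setOf_eq] at *
    have hadd : (A + B).map ⇑g = A.map ⇑g + B.map ⇑g := by
      ext i j; simp [Matrix.map_apply]
    rw [hadd, hA, hB]
    noncomm_ring
  · -- zero_mem
    simp only [Set.mem_setOf_eq]
    have h0 : (0 : Matrix (Fin 3) (Fin 3) L).map ⇑g = 0 := by
      ext i j; simp [Matrix.map_apply]
    rw [h0, Matrix.mul_zero, Matrix.zero_mul]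
  · intro r
    simp only [Set.mem_setOf_eq]
    have hmap : ((algebraMap k (Matrix (Fin 3) (Fin 3) L) r)).map ⇑g =
        algebraMap k (Matrix (Fin 3) (Fin 3) L) r := by
      ext i j
      by_cases h : i = j <;> simp [Matrix.map_apply, Matrix.algebraMap_matrix_apply, h]
    rw [hmap, Algebra.algebraMap_eq_smul_one, Matrix.mul_smul, Matrix.smul_mul,
      Matrix.mul_one, hP2]
  · -- finrank
    have hgxinv : ∀ x : L, g (ξ'⁻¹ * x) = ξ'⁻¹ * g x := by
      intro x; rw [_root_.map_mul, map_inv₀, hgxi]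
    set Mf : L × L × L → Matrix (Fin 3) (Fin 3) L := fun p =>
      !![p.1, p.2.1, p.2.2;
         ξ'⁻¹ * g p.2.2, g p.1, g p.2.1;
         ξ'⁻¹ * g (g p.2.1), ξ'⁻¹ * g (g p.2.2), g (g p.1)] with hMf
    have hmemMf : ∀ p : L × L × L, (Mf p).map ⇑g = P⁻¹ * Mf p * P := by
      intro p
      rw [key]
      ext i j
      fin_cases i <;> fin_cases j <;>
        simp [hMf, hP, Matrix.mul_apply, Fin.sum_univ_three, Matrix.map_apply,
          _root_.map_mul, map_inv₀, hgxi, hg3, mul_inv_cancel_left₀ hξ', Matrix.vecHead, Matrix.vecTail] <;>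
        (try field_simp) <;> (try ring)
    have hrow : ∀ A : Matrix (Fin 3) (Fin 3) L, P * A.map ⇑g = A * P →
        Mf (A 0 0, A 0 1, A 0 2) = A := by
      intro A hA
      have h10 := congrFun (congrFun hA 1) 0
      have h11 := congrFun (congrFun hA 1) 1
      have h12 := congrFun (congrFun hA 1) 2
      have h20 := congrFun (congrFun hA 2) 0
      have h21 := congrFun (congrFun hA 2) 1
      have h22 := congrFun (congrFun hA 2) 2
      simp [hP, Matrix.mul_apply, Fin.sum_univ_three, Matrix.map_apply,
        Matrix.vecHead, Matrix.vecTail] at h10 h11 h12 h20 h21 h22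
      ext i j
      fin_cases i <;> fin_cases j <;>
        simp [hMf, Matrix.vecHead, Matrix.vecTail]
      · rw [h12]; field_simp
      · exact h10
      · exact h11
      · rw [h11, h22]; field_simp
      · rw [h12, _root_.map_mul, hgxi, h20]; field_simp
      · rw [h10, h21]
    have main : ∀ S : Subalgebra k (Matrix (Fin 3) (Fin 3) L),
        (∀ A, A ∈ S ↔ A.map ⇑g = P⁻¹ * A * P) → Module.finrank k ↥S = 9 := by
      intro S hS
      let e : (L × L × L) ≃ₗ[k] ↥S :=
        { toFun := fun p => ⟨Mf p, (hS _).mpr (hmemMf p)⟩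
          map_add' := by
            rintro ⟨a, b, c⟩ ⟨a', b', c'⟩
            apply Subtype.ext
            show Mf (a + a', b + b', c + c') = Mf (a, b, c) + Mf (a', b', c')
            ext i j
            fin_cases i <;> fin_cases j <;>
              simp [hMf, _root_.map_add, mul_add, Matrix.vecHead, Matrix.vecTail]
          map_smul' := by
            rintro r ⟨a, b, c⟩
            apply Subtype.ext
            show Mf (r • a, r • b, r • c) = r • Mf (a, b, c)
            ext i j
            fin_cases i <;> fin_cases j <;>
              simp [hMf, Algebra.smul_def, _root_.map_mul, AlgEquiv.commutes,
                Matrix.smul_apply, mul_left_comm, Matrix.vecHead, Matrix.vecTail]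
          invFun := fun A => (A.1 0 0, A.1 0 1, A.1 0 2)
          left_inv := by
            rintro ⟨a, b, c⟩
            simp [hMf, Matrix.vecHead, Matrix.vecTail]
          right_inv := by
            rintro ⟨A, hA⟩
            rw [hS, key] at hA
            exact Subtype.ext (hrow A hA) }
      rw [← e.finrank_eq]
      rw [Module.finrank_prod, Module.finrank_prod, hdeg]
    exact main _ (fun A => Iff.rfl)
end

section
/- Assume ξ is not in the image of the norm map N_{L/k} : L^× → k^×, where N_{L/k}(x) = x·g(x)·g²(x). Then every nonzero matrix A ∈ D := {A ∈ Mat₃(L) : A^g = A_g⁻¹·A·A_g} is invertible in Mat₃(L), and its inverse again lies in D; in other words, D is a division algebra over k. -/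
open Matrix

/-- Assume `ξ` is not in the image of the norm map `N_{L/k} : L^× → k^×`,
where `N_{L/k}(x) = x·g(x)·g²(x)`. Then every nonzero matrix
`A ∈ D := {A ∈ Mat₃(L) : A^g = A_g⁻¹·A·A_g}` is invertible in `Mat₃(L)`, and its inverse
again lies in `D`; in other words, `D` is a division algebra over `k`. -/
theorem stmt_5 (k L : Type*) [Field k] [Field L] [Algebra k L] [IsGalois k L]
    (hdeg : Module.finrank k L = 3)
    (g : L ≃ₐ[k] L) (hg : ∀ σ : L ≃ₐ[k] L, σ ∈ Subgroup.zpowers g)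
    (ξ : k) (hξ : ξ ≠ 0)
    (hnorm : ¬ ∃ x : L, x ≠ 0 ∧ x * g x * g (g x) = algebraMap k L ξ)
    (A : Matrix (Fin 3) (Fin 3) L)
    (hA : A.map ⇑g =
        (!![0, 0, algebraMap k L ξ; 1, 0, 0; 0, 1, 0])⁻¹ * A *
          !![0, 0, algebraMap k L ξ; 1, 0, 0; 0, 1, 0])
    (hA0 : A ≠ 0) :
    IsUnit A ∧
      A⁻¹.map ⇑g =
        (!![0, 0, algebraMap k L ξ; 1, 0, 0; 0, 1, 0])⁻¹ * A⁻¹ *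
          !![0, 0, algebraMap k L ξ; 1, 0, 0; 0, 1, 0] := by
  set ξ' : L := algebraMap k L ξ with hξ'def
  have hξ'0 : ξ' ≠ 0 := by
    simp [hξ'def, hξ]
  set e : Matrix (Fin 3) (Fin 3) L := !![0, 0, ξ'; 1, 0, 0; 0, 1, 0] with he
  have hdete : e.det = ξ' := by
    rw [he, Matrix.det_fin_three]
    simp
  have hdete0 : IsUnit e.det := by rw [hdete]; exact isUnit_iff_ne_zero.2 hξ'0
  have hee : e * e⁻¹ = 1 := Matrix.mul_nonsing_inv e hdete0
  have he'e : e⁻¹ * e = 1 := Matrix.nonsing_inv_mul e hdete0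
  -- g has order dividing 3
  have hfd : FiniteDimensional k L :=
    Module.finite_of_finrank_pos (by rw [hdeg]; norm_num)
  letI := AlgEquiv.fintype k L
  have hcard : Fintype.card (L ≃ₐ[k] L) = 3 := by
    rw [← Nat.card_eq_fintype_card, IsGalois.card_aut_eq_finrank, hdeg]
  have hg3 : ∀ x : L, g (g (g x)) = x := by
    intro x
    have h3 : g ^ 3 = 1 := by rw [← hcard]; exact pow_card_eq_one
    have := congrArg (fun σ : L ≃ₐ[k] L => σ x) h3
    simpa [pow_succ, AlgEquiv.mul_apply] using this
  -- membership in `D` in product form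
  have hA' : e * A.map ⇑g = A * e := by
    rw [hA, ← Matrix.mul_assoc, ← Matrix.mul_assoc, hee, Matrix.one_mul]
  -- the determinant of A is nonzero
  have hdet : A.det ≠ 0 := by
    intro hdet
    -- adjugate stays in D
    have hadjD : e * (adjugate A).map ⇑g = adjugate A * e := by
      have hmap : (adjugate A).map ⇑g = adjugate (A.map ⇑g) := by
        have := RingHom.map_adjugate (g : L →+* L) A
        simpa [RingHom.mapMatrix_apply] using this
      have h1 : adjugate (e * A.map ⇑g) = adjugate (A * e) := by rw [hA']
      rw [Matrix.adjugate_mul_distrib, Matrix.adjugate_mul_distrib, ← hmap] at h1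
      -- h1 : (adjugate A).map g * adjugate e = adjugate e * adjugate A
      have h2 : e * ((adjugate A).map ⇑g * adjugate e) * e
          = e * (adjugate e * adjugate A) * e := by rw [h1]
      simp only [← Matrix.mul_assoc] at h2
      rw [Matrix.mul_assoc (e * (adjugate A).map ⇑g) (adjugate e) e,
        Matrix.adjugate_mul, Matrix.mul_adjugate, hdete] at h2
      rw [Matrix.mul_smul, Matrix.mul_one, Matrix.smul_mul, Matrix.smul_mul,
        Matrix.one_mul] at h2
      exact smul_right_injective _ hξ'0 h2
    -- pick a nonzero element of D with vanishing adjugate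
    obtain ⟨B, hB, hB0, hBadj⟩ :
        ∃ B : Matrix (Fin 3) (Fin 3) L,
          e * B.map ⇑g = B * e ∧ B ≠ 0 ∧ adjugate B = 0 := by
      by_cases hadjA : adjugate A = 0
      · exact ⟨A, hA', hA0, hadjA⟩
      · refine ⟨adjugate A, hadjD, hadjA, ?_⟩
        rw [Matrix.adjugate_adjugate A (by simp), hdet]
        simp
    -- entry relations
    have E : ∀ i j, (e * B.map ⇑g) i j = (B * e) i j := fun i j =>
      congrFun (congrFun hB i) j
    have E10 := E 1 0
    have E11 := E 1 1
    have E12 := E 1 2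
    have E20 := E 2 0
    have E21 := E 2 1
    have E22 := E 2 2
    simp [he, Matrix.mul_apply, Fin.sum_univ_three, Matrix.map_apply, Matrix.vecHead,
      Matrix.vecTail] at E10 E11 E12 E20 E21 E22
    -- E10 : g (B 0 0) = B 1 1, E11 : g (B 0 1) = B 1 2, E12 : g (B 0 2) = B 1 0 * ξ' (?)
    set a := B 0 0 with ha
    set b := B 0 1 with hb
    set c := B 0 2 with hc
    -- minors vanish
    have M1 : a * B 1 1 - b * B 1 0 = 0 := by
      have h := congrFun (congrFun hBadj 2) 2
      rw [Matrix.adjugate_fin_three] at h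
      simpa [← ha, ← hb] using h
    have M2 : -(a * B 1 2) + c * B 1 0 = 0 := by
      have h := congrFun (congrFun hBadj 1) 2
      rw [Matrix.adjugate_fin_three] at h
      simpa [← ha, ← hc] using h
    have M3 : b * B 1 2 - c * B 1 1 = 0 := by
      have h := congrFun (congrFun hBadj 0) 2
      rw [Matrix.adjugate_fin_three] at h
      simpa [← hb, ← hc] using h
    -- main algebraic contradiction
    by_cases ha0 : a = 0
    · -- first row must then vanish, forcing B = 0
      have hc0 : c = 0 := by
        rw [ha0] at M2
        simp only [zero_mul, neg_zero, zero_add] at M2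
        rcases mul_eq_zero.1 M2 with h | h
        · exact h
        · apply g.injective
          rw [map_zero, E12, h, zero_mul]
      have hb0 : b = 0 := by
        rw [hc0] at M3
        simp only [zero_mul, sub_zero] at M3
        rcases mul_eq_zero.1 M3 with h | h
        · exact h
        · apply g.injective
          rw [map_zero, E11, h]
      -- all entries of B vanish
      have h10 : B 1 0 = 0 := by
        have h := E12
        rw [hc0, map_zero] at h
        exact (mul_eq_zero.1 h.symm).resolve_right hξ'0
      have h11 : B 1 1 = 0 := by rw [← E10, ha0, map_zero]
      have h12 : B 1 2 = 0 := by rw [← E11, hb0, map_zero]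
      have h21 : B 2 1 = 0 := by rw [← E20, h10, map_zero]
      have h22 : B 2 2 = 0 := by rw [← E21, h11, map_zero]
      have h20 : B 2 0 = 0 := by
        have h := E22
        rw [h12, map_zero] at h
        exact (mul_eq_zero.1 h.symm).resolve_right hξ'0
      apply hB0
      rw [Matrix.eta_fin_three B, ← ha, ← hb, ← hc, ha0, hb0, hc0, h10, h11, h12,
        h20, h21, h22]
      ext i j
      fin_cases i <;> fin_cases j <;> rfl
    · -- a ≠ 0 : extract a norm equation
      obtain ⟨μ, hμ1⟩ : ∃ μ : L, B 1 0 = μ * a := ⟨B 1 0 / a, by field_simp⟩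
      have hga : g a = μ * b := by
        rw [← E10, hμ1] at M1
        have h : g a * a = μ * b * a := by linear_combination M1
        exact mul_right_cancel₀ ha0 h
      have hgb : g b = μ * c := by
        rw [← E11, hμ1] at M2
        have h : g b * a = μ * c * a := by linear_combination -M2
        exact mul_right_cancel₀ ha0 h
      have hgc : g c = ξ' * (μ * a) := by
        rw [E12, hμ1]; ring
      have key : g (g (g a)) = g (g μ) * g μ * μ * ξ' * a := by
        rw [hga, _root_.map_mul, hgb, _root_.map_mul, _root_.map_mul, hgc]; ring
      rw [hg3 a] at key
      have hmain : μ * g μ * g (g μ) * ξ' = 1 := by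
        have h : (μ * g μ * g (g μ) * ξ') * a = 1 * a := by
          rw [one_mul]; linear_combination -key
        exact mul_right_cancel₀ ha0 h
      have hμ0 : μ ≠ 0 := by
        intro h
        rw [h] at hmain
        simp at hmain
      have hgμ0 : g μ ≠ 0 := fun h => hμ0 (g.injective (by rw [h, map_zero]))
      have hggμ0 : g (g μ) ≠ 0 := fun h => hgμ0 (g.injective (by rw [h, map_zero]))
      refine hnorm ⟨μ⁻¹, inv_ne_zero hμ0, ?_⟩
      rw [map_inv₀, map_inv₀]
      field_simp
      linear_combination -hmain
  refine ⟨(Matrix.isUnit_iff_isUnit_det A).2 (isUnit_iff_ne_zero.2 hdet), ?_⟩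
  have h1 : A⁻¹.map ⇑g = (A.map ⇑g)⁻¹ := by
    refine (Matrix.inv_eq_left_inv ?_).symm
    ext i j
    rw [Matrix.mul_apply]
    simp only [Matrix.map_apply, ← _root_.map_mul]
    rw [← map_sum g, ← Matrix.mul_apply, Matrix.nonsing_inv_mul A (isUnit_iff_ne_zero.2 hdet)]
    by_cases hij : i = j <;> simp [Matrix.one_apply, hij]
  rw [h1, hA, Matrix.mul_inv_rev, Matrix.mul_inv_rev,
    Matrix.nonsing_inv_nonsing_inv e hdete0, ← Matrix.mul_assoc]
end

section
/- Let b ∈ L be a primitive element, i.e. L = k(b), and let D_b := diag(b, g(b), g²(b)). Then the nine matrices D_b^i · A_g^j for i, j ∈ {0, 1, 2} form a basis of Mat₃(L) as an L-vector space (they are L-linearly independent and span Mat₃(L)). -/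
open Matrix

private lemma vand3 {L : Type*} [Field L] {x0 x1 x2 c0 c1 c2 : L}
    (h01 : x0 ≠ x1) (h02 : x0 ≠ x2) (h12 : x1 ≠ x2)
    (e0 : c0 + c1 * x0 + c2 * x0 ^ 2 = 0)
    (e1 : c0 + c1 * x1 + c2 * x1 ^ 2 = 0)
    (e2 : c0 + c1 * x2 + c2 * x2 ^ 2 = 0) :
    c0 = 0 ∧ c1 = 0 ∧ c2 = 0 := by
  have h01' := sub_ne_zero.mpr h01
  have h02' := sub_ne_zero.mpr h02
  have h12' := sub_ne_zero.mpr h12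
  have hc2 : c2 = 0 := by
    have h : c2 * ((x0 - x1) * (x0 - x2) * (x1 - x2)) = 0 := by
      linear_combination (x1 - x2) * e0 + (x2 - x0) * e1 + (x0 - x1) * e2
    exact (mul_eq_zero.mp h).resolve_right
      (mul_ne_zero (mul_ne_zero h01' h02') h12')
  have hc1 : c1 = 0 := by
    have h : c1 * (x0 - x1) = 0 := by
      linear_combination e0 - e1 + (x1 ^ 2 - x0 ^ 2) * hc2
    exact (mul_eq_zero.mp h).resolve_right h01'
  refine ⟨?_, hc1, hc2⟩
  linear_combination e0 - x0 * hc1 - x0 ^ 2 * hc2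

/-- Let `b ∈ L` be a primitive element, i.e. `L = k(b)`, and let
`D_b := diag(b, g(b), g²(b))`. Then the nine matrices `D_b^i · A_g^j` for
`i, j ∈ {0, 1, 2}` form a basis of `Mat₃(L)` as an `L`-vector space (they are
`L`-linearly independent and span `Mat₃(L)`). -/
theorem stmt_6 (k L : Type*) [Field k] [Field L] [Algebra k L] [IsGalois k L]
    (hdeg : Module.finrank k L = 3)
    (g : L ≃ₐ[k] L) (hg : ∀ σ : L ≃ₐ[k] L, σ ∈ Subgroup.zpowers g)
    (ξ : k) (hξ : ξ ≠ 0)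
    (b : L) (hb : IntermediateField.adjoin k {b} = ⊤) :
    LinearIndependent L
        (fun p : Fin 3 × Fin 3 =>
          (Matrix.diagonal ![b, g b, g (g b)]) ^ (p.1 : ℕ) *
            (!![0, 0, algebraMap k L ξ; 1, 0, 0; 0, 1, 0]) ^ (p.2 : ℕ)) ∧
      Submodule.span L
          (Set.range fun p : Fin 3 × Fin 3 =>
            (Matrix.diagonal ![b, g b, g (g b)]) ^ (p.1 : ℕ) *
              (!![0, 0, algebraMap k L ξ; 1, 0, 0; 0, 1, 0]) ^ (p.2 : ℕ)) = ⊤ := by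
  haveI : FiniteDimensional k L := FiniteDimensional.of_finrank_pos (by omega)
  set q : L := algebraMap k L ξ with hqdef
  have hq : q ≠ 0 := by
    rw [hqdef]
    exact fun h0 => hξ ((algebraMap k L).injective (by rw [h0, map_zero]))
  -- `g b ≠ b`
  have hne : g b ≠ b := by
    intro h
    have hfixnat : ∀ m : ℕ, (g ^ m) b = b := by
      intro m
      induction m with
      | zero => rfl
      | succ n ih => rw [pow_succ, AlgEquiv.mul_apply, h, ih]
    have hfix : ∀ σ : L ≃ₐ[k] L, σ b = b := by
      intro σ
      obtain ⟨n, rfl⟩ := Subgroup.mem_zpowers_iff.mp (hg σ)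
      rcases n with m | m
      · simpa using hfixnat m
      · rw [zpow_negSucc]
        conv_lhs => rw [← hfixnat (m + 1)]
        rw [← AlgEquiv.mul_apply, inv_mul_cancel, AlgEquiv.one_apply]
    have hbbot : b ∈ (⊥ : IntermediateField k L) := by
      rw [← IsGalois.fixedField_fixingSubgroup (⊥ : IntermediateField k L)]
      exact fun σ => hfix σ.1
    have hbot : IntermediateField.adjoin k {b} = ⊥ :=
      IntermediateField.adjoin_simple_eq_bot_iff.mpr hbbot
    rw [hb] at hbot
    have h1 : Module.finrank k (⊤ : IntermediateField k L) = 1 := by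
      rw [hbot, IntermediateField.finrank_bot]
    rw [IntermediateField.finrank_top', hdeg] at h1
    omega
  -- `g ^ 3 = 1`
  have hg3 : g ^ 3 = 1 := by
    have htop : Subgroup.zpowers g = ⊤ := by
      rw [Subgroup.eq_top_iff']; exact hg
    have hcard : Nat.card (L ≃ₐ[k] L) = 3 := by
      rw [IsGalois.card_aut_eq_finrank, hdeg]
    have ho : orderOf g = 3 := by
      rw [← Nat.card_zpowers, htop, ← hcard]
      exact Nat.card_congr Subgroup.topEquiv.toEquiv
    rw [← ho]; exact pow_orderOf_eq_one g
  -- the three conjugates are pairwise distinct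
  have h01 : b ≠ g b := fun h => hne h.symm
  have h02 : b ≠ g (g b) := by
    intro h
    apply hne
    have h3 : (g ^ 3) b = b := by rw [hg3, AlgEquiv.one_apply]
    have h3' : g (g (g b)) = b := by
      simpa [pow_succ, pow_zero, AlgEquiv.mul_apply, AlgEquiv.one_apply] using h3
    calc g b = g (g (g b)) := congrArg g h
      _ = b := h3'
  have h12 : g b ≠ g (g b) := fun h => h01 (g.injective h)
  -- linear independence
  have hA2 : (!![0, 0, q; 1, 0, 0; 0, 1, 0] : Matrix (Fin 3) (Fin 3) L) ^ 2
      = !![0, q, 0; 0, 0, q; 1, 0, 0] := by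
    rw [pow_two]
    norm_num [Matrix.mul_fin_three]
  have hli : LinearIndependent L
      (fun p : Fin 3 × Fin 3 =>
        (Matrix.diagonal ![b, g b, g (g b)]) ^ (p.1 : ℕ) *
          (!![0, 0, algebraMap k L ξ; 1, 0, 0; 0, 1, 0]) ^ (p.2 : ℕ)) := by
    rw [Fintype.linearIndependent_iff]
    intro c hc
    simp only [Fintype.sum_prod_type, Fin.sum_univ_three, Fin.isValue, Fin.val_zero, Fin.val_one,
      Fin.val_two, pow_zero, pow_one, ← hqdef, hA2, Matrix.diagonal_pow, mul_one] at hc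
    have he : ∀ r s : Fin 3, _ := fun r s => congrFun (congrFun hc r) s
    have e00 := he 0 0
    have e11 := he 1 1
    have e22 := he 2 2
    have e02 := he 0 2
    have e10 := he 1 0
    have e21 := he 2 1
    have e01 := he 0 1
    have e12 := he 1 2
    have e20 := he 2 0
    simp [Matrix.add_apply, Matrix.smul_apply, Matrix.diagonal_apply, smul_eq_mul,
      Matrix.mul_apply, Fin.sum_univ_three, Matrix.vecHead, Matrix.vecTail]
        at e00 e11 e22 e02 e10 e21 e01 e12 e20
    -- column j = 0 equations
    have f00 : c (0,0) + c (1,0) * b + c (2,0) * b ^ 2 = 0 := by linear_combination e00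
    have f10 : c (0,0) + c (1,0) * (g b) + c (2,0) * (g b) ^ 2 = 0 := by linear_combination e11
    have f20 : c (0,0) + c (1,0) * (g (g b)) + c (2,0) * (g (g b)) ^ 2 = 0 := by
      linear_combination e22
    -- column j = 1 equations
    have f01 : c (0,1) + c (1,1) * b + c (2,1) * b ^ 2 = 0 := by
      have h : (c (0,1) + c (1,1) * b + c (2,1) * b ^ 2) * q = 0 := by linear_combination e02
      exact (mul_eq_zero.mp h).resolve_right hq
    have f11 : c (0,1) + c (1,1) * (g b) + c (2,1) * (g b) ^ 2 = 0 := by linear_combination e10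
    have f21 : c (0,1) + c (1,1) * (g (g b)) + c (2,1) * (g (g b)) ^ 2 = 0 := by
      linear_combination e21
    -- column j = 2 equations
    have f02 : c (0,2) + c (1,2) * b + c (2,2) * b ^ 2 = 0 := by
      have h : (c (0,2) + c (1,2) * b + c (2,2) * b ^ 2) * q = 0 := by linear_combination e01
      exact (mul_eq_zero.mp h).resolve_right hq
    have f12 : c (0,2) + c (1,2) * (g b) + c (2,2) * (g b) ^ 2 = 0 := by
      have h : (c (0,2) + c (1,2) * (g b) + c (2,2) * (g b) ^ 2) * q = 0 := by
        linear_combination e12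
      exact (mul_eq_zero.mp h).resolve_right hq
    have f22 : c (0,2) + c (1,2) * (g (g b)) + c (2,2) * (g (g b)) ^ 2 = 0 := by
      linear_combination e20
    obtain ⟨g00, g10, g20⟩ := vand3 h01 h02 h12 f00 f10 f20
    obtain ⟨g01, g11, g21⟩ := vand3 h01 h02 h12 f01 f11 f21
    obtain ⟨g02, g12, g22⟩ := vand3 h01 h02 h12 f02 f12 f22
    intro p
    fin_cases p <;> assumption
  refine ⟨hli, hli.span_eq_top_of_card_eq_finrank ?_⟩
  simp [Module.finrank_matrix]
end

section
/- Let A_g^op ∈ GL₃(L) be the matrix with rows (0,0,ξ⁻¹), (1,0,0), (0,1,0), and let D_ξ := diag(1, ξ, ξ²). If A ∈ Mat₃(L) satisfies A^g = (A_g^op)⁻¹·A·A_g^op, then the matrix B := A^Σ·D_ξ satisfies B^g = A_g⁻¹·B·A_g. -/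
open Matrix

/-- For `A ∈ Mat₃`, the matrix `A^Σ` with entries `(A^Σ)_{ij} = ∏_{k≠i} A_{kj}`:
the `j`-th column of `A^Σ` is the standard quadratic map `Σ(x,y,z) = (yz,xz,xy)`
applied to the `j`-th column of `A`. -/
def sigmaMat {C : Type*} [CommRing C] (A : Matrix (Fin 3) (Fin 3) C) :
    Matrix (Fin 3) (Fin 3) C :=
  Matrix.of fun i j => A (i + 1) j * A (i + 2) j

/-- Let `A_g^op ∈ GL₃(L)` be the matrix with rows `(0,0,ξ⁻¹), (1,0,0),
(0,1,0)`, and let `D_ξ := diag(1, ξ, ξ²)`. If `A ∈ Mat₃(L)` satisfies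
`A^g = (A_g^op)⁻¹·A·A_g^op`, then the matrix `B := A^Σ·D_ξ` satisfies
`B^g = A_g⁻¹·B·A_g`. -/
theorem stmt_11 (k L : Type*) [Field k] [Field L] [Algebra k L] [IsGalois k L]
    (hdeg : Module.finrank k L = 3)
    (g : L ≃ₐ[k] L) (hg : ∀ σ : L ≃ₐ[k] L, σ ∈ Subgroup.zpowers g)
    (ξ : k) (hξ : ξ ≠ 0)
    (A : Matrix (Fin 3) (Fin 3) L)
    (hA : A.map ⇑g =
        (!![0, 0, (algebraMap k L ξ)⁻¹; 1, 0, 0; 0, 1, 0])⁻¹ * A *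
          !![0, 0, (algebraMap k L ξ)⁻¹; 1, 0, 0; 0, 1, 0]) :
    (sigmaMat A * Matrix.diagonal ![1, algebraMap k L ξ, algebraMap k L ξ ^ 2]).map ⇑g =
      (!![0, 0, algebraMap k L ξ; 1, 0, 0; 0, 1, 0])⁻¹ *
          (sigmaMat A * Matrix.diagonal ![1, algebraMap k L ξ, algebraMap k L ξ ^ 2]) *
        !![0, 0, algebraMap k L ξ; 1, 0, 0; 0, 1, 0] := by
  set c : L := algebraMap k L ξ with hcdef
  have hc0 : c ≠ 0 := by
    simpa [hcdef] using (map_ne_zero (algebraMap k L)).mpr hξ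
  have hgc : g c = c := g.commutes ξ
  have hAinv : (!![0, 0, c⁻¹; 1, 0, 0; 0, 1, 0])⁻¹ = !![0, 1, 0; 0, 0, 1; c, 0, 0] := by
    apply Matrix.inv_eq_left_inv
    ext a b
    fin_cases a <;> fin_cases b <;>
      simp [Matrix.mul_apply, Fin.sum_univ_three, Matrix.one_apply, Matrix.vecHead,
        Matrix.vecTail, mul_inv_cancel₀ hc0]
  have hBinv : (!![0, 0, c; 1, 0, 0; 0, 1, 0])⁻¹ = !![0, 1, 0; 0, 0, 1; c⁻¹, 0, 0] := by
    apply Matrix.inv_eq_left_inv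
    ext a b
    fin_cases a <;> fin_cases b <;>
      simp [Matrix.mul_apply, Fin.sum_univ_three, Matrix.one_apply, Matrix.vecHead,
        Matrix.vecTail, inv_mul_cancel₀ hc0]
  rw [hAinv] at hA
  rw [hBinv]
  have e : ∀ i j, g (A i j) = (!![0, 1, 0; 0, 0, 1; c, 0, 0] * A *
      !![0, 0, c⁻¹; 1, 0, 0; 0, 1, 0]) i j := by
    intro i j
    have := congrFun (congrFun hA i) j
    simpa [Matrix.map_apply] using this
  have e00 := e 0 0; have e01 := e 0 1; have e02 := e 0 2
  have e10 := e 1 0; have e11 := e 1 1; have e12 := e 1 2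
  have e20 := e 2 0; have e21 := e 2 1; have e22 := e 2 2
  simp [Matrix.mul_apply, Matrix.vecMul, dotProduct, Fin.sum_univ_three, Matrix.vecHead,
    Matrix.vecTail] at e00 e01 e02 e10 e11 e12 e20 e21 e22
  ext i j
  fin_cases i <;> fin_cases j <;>
  · simp [Matrix.mul_apply, Matrix.vecMul, dotProduct, Fin.sum_univ_three, sigmaMat, Matrix.vecHead, Matrix.vecTail,
      _root_.map_mul, hgc, _root_.map_one, map_pow, show ((0:Fin 3)+1 = 1) from rfl,
      show ((0:Fin 3)+2 = 2) from rfl, show ((1:Fin 3)+1 = 2) from rfl,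
      show ((1:Fin 3)+2 = 0) from rfl, show ((2:Fin 3)+1 = 0) from rfl,
      show ((2:Fin 3)+2 = 1) from rfl, e00, e01, e02, e10, e11, e12, e20, e21, e22]
    try field_simp
    try ring
    try tauto
end

section
/- Let A ∈ GL₃(C) and assume all entries of A and of A⁻¹ are nonzero and that A^Σ and M₂(A)^Σ are invertible. Then det(M₃(A)) = −(P(A)·det(A)·det(M₂(A))⁴)⁻¹ and P(M₂(A)) = −P(A⁻¹)·P(A)²·det(A)⁹·det(M₂(A))⁹. -/
open Matrix

/-- `M₂(A) := (A^Σ)⁻¹`. -/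
noncomputable def M2 {C : Type*} [Field C] (A : Matrix (Fin 3) (Fin 3) C) :
    Matrix (Fin 3) (Fin 3) C :=
  (sigmaMat A)⁻¹

/-- `M₃(A) := (M₂(A)^Σ)⁻¹`. -/
noncomputable def M3 {C : Type*} [Field C] (A : Matrix (Fin 3) (Fin 3) C) :
    Matrix (Fin 3) (Fin 3) C :=
  (sigmaMat (M2 A))⁻¹

/-- `P(A)`, the product of all nine entries of `A`. -/
def Pent {C : Type*} [CommRing C] (A : Matrix (Fin 3) (Fin 3) C) : C :=
  ∏ i : Fin 3, ∏ j : Fin 3, A i j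

lemma sigmaMat_smul {C : Type*} [CommRing C] (c : C) (B : Matrix (Fin 3) (Fin 3) C) :
    sigmaMat (c • B) = (c ^ 2) • sigmaMat B := by
  ext i j
  simp [sigmaMat]
  ring

lemma Pent_smul {C : Type*} [CommRing C] (c : C) (B : Matrix (Fin 3) (Fin 3) C) :
    Pent (c • B) = c ^ 9 * Pent B := by
  simp [Pent, Fin.prod_univ_three]
  ring

lemma key1 {C : Type*} [CommRing C] (A : Matrix (Fin 3) (Fin 3) C) :
    (sigmaMat (adjugate (sigmaMat A))).det
      = -(Pent A * A.det * (sigmaMat A).det ^ 2) := by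
  simp [sigmaMat, Pent, Matrix.det_fin_three, Matrix.adjugate_fin_three,
    Fin.prod_univ_three]
  ring

lemma key2 {C : Type*} [CommRing C] (A : Matrix (Fin 3) (Fin 3) C) :
    Pent (adjugate (sigmaMat A)) = -(Pent (adjugate A) * Pent A ^ 2) := by
  simp [sigmaMat, Pent, Matrix.adjugate_fin_three, Fin.prod_univ_three]
  ring

/-- Let `A ∈ GL₃(C)` and assume all entries of `A` and of `A⁻¹` are nonzero
and that `A^Σ` and `M₂(A)^Σ` are invertible. Then
`det(M₃(A)) = −(P(A)·det(A)·det(M₂(A))⁴)⁻¹` and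
`P(M₂(A)) = −P(A⁻¹)·P(A)²·det(A)⁹·det(M₂(A))⁹`. -/
theorem stmt_14 (C : Type*) [Field C] (A : Matrix (Fin 3) (Fin 3) C)
    (hA : IsUnit A.det)
    (hent : ∀ p q, A p q ≠ 0) (hent' : ∀ p q, A⁻¹ p q ≠ 0)
    (hs : IsUnit (sigmaMat A).det) (hs2 : IsUnit (sigmaMat (M2 A)).det) :
    (M3 A).det = -(Pent A * A.det * (M2 A).det ^ 4)⁻¹ ∧
      Pent (M2 A) = -(Pent A⁻¹ * Pent A ^ 2 * A.det ^ 9 * (M2 A).det ^ 9) := by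
  have hdA : A.det ≠ 0 := hA.ne_zero
  have hS : (sigmaMat A).det ≠ 0 := hs.ne_zero
  have hP : Pent A ≠ 0 := by
    refine Finset.prod_ne_zero_iff.mpr fun i _ => Finset.prod_ne_zero_iff.mpr fun j _ => hent i j
  have hM2 : M2 A = ((sigmaMat A).det)⁻¹ • adjugate (sigmaMat A) := by
    rw [M2, Matrix.inv_def, Ring.inverse_eq_inv']
  have hdetM2 : (M2 A).det = ((sigmaMat A).det)⁻¹ := by
    rw [M2, Matrix.det_nonsing_inv, Ring.inverse_eq_inv']
  have hsigM2 : sigmaMat (M2 A) = (((sigmaMat A).det)⁻¹ ^ 2) • sigmaMat (adjugate (sigmaMat A)) := by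
    rw [hM2, sigmaMat_smul]
  have hT : (sigmaMat (M2 A)).det = -(Pent A * A.det * ((sigmaMat A).det ^ 4)⁻¹) := by
    rw [hsigM2, Matrix.det_smul, key1]
    simp only [Fintype.card_fin]
    field_simp
  constructor
  · have h3 : (M3 A).det = ((sigmaMat (M2 A)).det)⁻¹ := by
      rw [M3, Matrix.det_nonsing_inv, Ring.inverse_eq_inv']
    rw [h3, hT, hdetM2, inv_neg]
    rw [inv_pow]
  · have hAinv : A⁻¹ = (A.det)⁻¹ • adjugate A := by
      rw [Matrix.inv_def, Ring.inverse_eq_inv']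
    rw [hdetM2, hM2, Pent_smul, key2, hAinv, Pent_smul]
    field_simp
end

section
/- Let A ∈ Mat₃(C) with A^Σ invertible, let D be an invertible diagonal matrix, and let μ ∈ C be nonzero. Then M₂(A·D) = D⁻²·M₂(A), M₂(D·A) = det(D)⁻¹·M₂(A)·D, and M₂(μ·A) = μ⁻²·M₂(A). -/
open Matrix

/-- Let `A ∈ Mat₃(C)` with `A^Σ` invertible, let `D` be an invertible
diagonal matrix, and let `μ ∈ C` be nonzero. Then (with `M₂(X) := (X^Σ)⁻¹`)
`M₂(A·D) = D⁻²·M₂(A)`, `M₂(D·A) = det(D)⁻¹·M₂(A)·D`, and `M₂(μ·A) = μ⁻²·M₂(A)`. -/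
theorem stmt_16 (C : Type*) [Field C] (A : Matrix (Fin 3) (Fin 3) C)
    (hs : IsUnit (sigmaMat A).det)
    (d : Fin 3 → C) (hd : ∀ i, d i ≠ 0) (μ : C) (hμ : μ ≠ 0) :
    (sigmaMat (A * Matrix.diagonal d))⁻¹ = ((Matrix.diagonal d)⁻¹) ^ 2 * (sigmaMat A)⁻¹ ∧
      (sigmaMat (Matrix.diagonal d * A))⁻¹ =
        (Matrix.diagonal d).det⁻¹ • ((sigmaMat A)⁻¹ * Matrix.diagonal d) ∧
      (sigmaMat (μ • A))⁻¹ = μ⁻¹ ^ 2 • (sigmaMat A)⁻¹ := by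
  have hS : (sigmaMat A)⁻¹ * sigmaMat A = 1 := Matrix.nonsing_inv_mul _ hs
  refine ⟨?_, ?_, ?_⟩
  · have h1 : sigmaMat (A * Matrix.diagonal d)
        = sigmaMat A * Matrix.diagonal (fun j => d j * d j) := by
      ext i j
      simp [sigmaMat, Matrix.mul_diagonal]
      ring
    rw [h1]
    apply Matrix.inv_eq_left_inv
    have h2 : (Matrix.diagonal d)⁻¹ ^ 2
        = Matrix.diagonal (fun i => (d i)⁻¹ * (d i)⁻¹) := by
      have hi : (Matrix.diagonal d)⁻¹ = Matrix.diagonal (fun i => (d i)⁻¹) := by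
        apply Matrix.inv_eq_left_inv
        rw [Matrix.diagonal_mul_diagonal]
        have : (fun i => (d i)⁻¹ * d i) = fun _ : Fin 3 => (1 : C) := by
          funext i; exact inv_mul_cancel₀ (hd i)
        rw [this, Matrix.diagonal_one]
      rw [hi, sq, Matrix.diagonal_mul_diagonal]
    rw [h2, Matrix.mul_assoc, ← Matrix.mul_assoc (sigmaMat A)⁻¹, hS, Matrix.one_mul,
      Matrix.diagonal_mul_diagonal]
    have h4 : (fun i => (d i)⁻¹ * (d i)⁻¹ * (d i * d i)) = fun _ : Fin 3 => (1 : C) := by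
      funext i; field_simp [hd i]
    rw [h4, Matrix.diagonal_one]
  · have h1 : sigmaMat (Matrix.diagonal d * A)
        = Matrix.diagonal (fun i => d (i + 1) * d (i + 2)) * sigmaMat A := by
      ext i j
      simp [sigmaMat, Matrix.diagonal_mul]
      ring
    rw [h1]
    apply Matrix.inv_eq_left_inv
    rw [Matrix.smul_mul, Matrix.mul_assoc, ← Matrix.mul_assoc (Matrix.diagonal d), Matrix.diagonal_mul_diagonal]
    have hfun : (fun i : Fin 3 => d i * (d (i + 1) * d (i + 2)))
        = fun _ : Fin 3 => (Matrix.diagonal d).det := by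
      funext i
      rw [Matrix.det_diagonal, Fin.prod_univ_three]
      fin_cases i <;> simp <;> ring
    rw [hfun, ← Matrix.smul_one_eq_diagonal, Matrix.smul_mul, Matrix.mul_smul, Matrix.one_mul,
      hS, smul_smul]
    have hdet : (Matrix.diagonal d).det ≠ 0 := by
      rw [Matrix.det_diagonal, Fin.prod_univ_three]
      exact mul_ne_zero (mul_ne_zero (hd 0) (hd 1)) (hd 2)
    rw [inv_mul_cancel₀ hdet, one_smul]
  · have h1 : sigmaMat (μ • A) = (μ * μ) • sigmaMat A := by
      ext i j
      simp [sigmaMat]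
      ring
    rw [h1]
    apply Matrix.inv_eq_left_inv
    rw [Matrix.smul_mul, Matrix.mul_smul, hS, smul_smul]
    have : μ⁻¹ ^ 2 * (μ * μ) = 1 := by field_simp [hμ]
    rw [this, one_smul]
end

section
/- Then A_g·B(b)^g = ξ·B(b)·D_b^g, where D_b^g := diag(g(b), g(g'(b)), g(g'(g'(b)))), and B(b)^{g'} = B(b)·C, where C is the permutation matrix with rows (0,0,1), (1,0,0), (0,1,0). -/
open Matrix

/-- With `F, g, g', ξ, b` as in the context (`g, g'` commuting automorphisms
of order dividing 3, `ξ ≠ 0` fixed by both, `b·g(b)·g²(b) = ξ⁻²`), and `B(b)` the matrix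
with columns `(1, 1/(ξ·g(b)), b)`, `(1, 1/(ξ·g(g'(b))), g'(b))`,
`(1, 1/(ξ·g(g'(g'(b)))), g'(g'(b)))`, one has `A_g·B(b)^g = ξ·B(b)·D_b^g`, where
`D_b^g := diag(g(b), g(g'(b)), g(g'(g'(b))))`, and `B(b)^{g'} = B(b)·C`, where `C` is the
permutation matrix with rows `(0,0,1), (1,0,0), (0,1,0)`. -/
theorem stmt_17 (F : Type*) [Field F] (g g' : F ≃+* F)
    (hcomm : ∀ x : F, g (g' x) = g' (g x))
    (hg3 : ∀ x : F, g (g (g x)) = x) (hg'3 : ∀ x : F, g' (g' (g' x)) = x)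
    (ξ : F) (hξ : ξ ≠ 0) (hgξ : g ξ = ξ) (hg'ξ : g' ξ = ξ)
    (b : F) (hb : b ≠ 0) (hnorm : b * g b * g (g b) = (ξ ^ 2)⁻¹) :
    !![0, 0, ξ; 1, 0, 0; 0, 1, 0] *
        (!![(1 : F), 1, 1;
            (ξ * g b)⁻¹, (ξ * g (g' b))⁻¹, (ξ * g (g' (g' b)))⁻¹;
            b, g' b, g' (g' b)]).map ⇑g =
      ξ • (!![(1 : F), 1, 1;
              (ξ * g b)⁻¹, (ξ * g (g' b))⁻¹, (ξ * g (g' (g' b)))⁻¹;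
              b, g' b, g' (g' b)] *
            Matrix.diagonal ![g b, g (g' b), g (g' (g' b))]) ∧
      (!![(1 : F), 1, 1;
          (ξ * g b)⁻¹, (ξ * g (g' b))⁻¹, (ξ * g (g' (g' b)))⁻¹;
          b, g' b, g' (g' b)]).map ⇑g' =
        !![(1 : F), 1, 1;
           (ξ * g b)⁻¹, (ξ * g (g' b))⁻¹, (ξ * g (g' (g' b)))⁻¹;
           b, g' b, g' (g' b)] * !![0, 0, 1; 1, 0, 0; 0, 1, 0] := by
  have key : ∀ x : F, x * g x * g (g x) = (ξ ^ 2)⁻¹ →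
      ξ * (x * g x) = (ξ * g (g x))⁻¹ := by
    intro x hx
    have h1 : ξ ^ 2 * (x * g x * g (g x)) = 1 := by
      rw [hx]; field_simp
    have hggx : g (g x) ≠ 0 := by
      intro h; rw [h] at h1; simp at h1
    field_simp
    linear_combination h1
  have hb' : ∀ x : F, x ≠ 0 → g x ≠ 0 := fun x hx => by
    simpa using (map_ne_zero g).mpr hx
  have hb'' : ∀ x : F, x ≠ 0 → g' x ≠ 0 := fun x hx => by
    simpa using (map_ne_zero g').mpr hx
  have hnorm' : g' b * g (g' b) * g (g (g' b)) = (ξ ^ 2)⁻¹ := by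
    have := congrArg g' hnorm
    simpa [_root_.map_mul, map_inv₀, map_pow, hcomm, hg'ξ] using this
  have hnorm'' : g' (g' b) * g (g' (g' b)) * g (g (g' (g' b))) = (ξ ^ 2)⁻¹ := by
    have := congrArg g' hnorm'
    simpa [_root_.map_mul, map_inv₀, map_pow, hcomm, hg'ξ] using this
  have k0 := key b hnorm
  have k1 := key (g' b) hnorm'
  have k2 := key (g' (g' b)) hnorm''
  simp only [hcomm] at k0 k1 k2
  have hgb := hb' b hb
  have hg'b := hb'' b hb
  have hgg'b := hb' _ hg'b
  have hg''b := hb'' _ hg'b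
  have hgg''b := hb' _ hg''b
  have h1 : g' (g b) ≠ 0 := hb'' _ hgb
  have h2 : g' (g' (g b)) ≠ 0 := hb'' _ h1
  have h3 : g (g b) ≠ 0 := hb' _ hgb
  have h4 : g' (g (g b)) ≠ 0 := hb'' _ h3
  have h5 : g' (g' (g (g b))) ≠ 0 := hb'' _ h4
  have m0 : ξ ^ 2 * (b * g b * g (g b)) = 1 := by
    rw [hnorm]; exact mul_inv_cancel₀ (pow_ne_zero 2 hξ)
  have m1 : ξ ^ 2 * (g' b * g' (g b) * g' (g (g b))) = 1 := by
    have := congrArg g' m0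
    simpa [_root_.map_mul, _root_.map_pow, _root_.map_one, hg'ξ] using this
  have m2 : ξ ^ 2 * (g' (g' b) * g' (g' (g b)) * g' (g' (g (g b)))) = 1 := by
    have := congrArg g' m1
    simpa [_root_.map_mul, _root_.map_pow, _root_.map_one, hg'ξ] using this
  constructor
  · ext i j
    fin_cases i <;> fin_cases j <;>
      simp [Matrix.mul_apply, Fin.sum_univ_succ, _root_.map_mul, map_inv₀, hgξ,
        Matrix.mul_diagonal, Matrix.vecMul_diagonal, hcomm, hg3]
    all_goals try field_simp
    all_goals first
        | ring1
        | linear_combination -m0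
        | linear_combination -m1
        | linear_combination -m2
  · ext i j
    fin_cases i <;> fin_cases j <;>
      simp [Matrix.mul_apply, Fin.sum_univ_succ, _root_.map_mul, map_inv₀, hg'ξ,
        hcomm, hg'3]
end
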